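/- For any integral domain D, the ring R(D) is local, and its maximal ideal is generated by the elements 1/f where f ranges over the non-Egyptian nonzero elements of D. -/

import Mathlib

set_option maxHeartbeats 1000000
set_option synthInstance.maxHeartbeats 200000

noncomputable def recip (D : Type*) [CommRing D] [IsDomain D] : Subring (FractionRing D) :=
  Subring.closure {x | ∃ d : D, d ≠ 0 ∧ x = (algebraMap D (FractionRing D) d)⁻¹}

set_option linter.unusedSectionVars false

namespace RecipAux

variable {D : Type*} [CommRing D] [IsDomain D]

local notation "F" => FractionRing D
local notation "ι" => algebraMap D (FractionRing D)

omit [IsDomain D] in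
lemma iota_inj : Function.Injective (ι) := IsFractionRing.injective D (FractionRing D)

lemma iota_ne_zero {d : D} (hd : d ≠ 0) : (ι) d ≠ 0 := by
  simpa using (map_ne_zero_iff (ι) iota_inj).2 hd

lemma inv_mem {d : D} (hd : d ≠ 0) : ((ι) d)⁻¹ ∈ recip D :=
  Subring.subset_closure ⟨d, hd, rfl⟩

/-- representation as a sum of reciprocals -/
def IsRep (x : F) : Prop :=
  ∃ m : Multiset D, (∀ d ∈ m, d ≠ 0) ∧ x = (m.map (fun d => ((ι) d)⁻¹)).sum

lemma IsRep.zero : IsRep (0 : F) := ⟨0, by simp, by simp⟩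

lemma IsRep.one : IsRep (1 : F) := ⟨{1}, by simp, by simp⟩

lemma IsRep.add {x y : F} (hx : IsRep x) (hy : IsRep y) : IsRep (x + y) := by
  obtain ⟨m, hm, rfl⟩ := hx
  obtain ⟨n, hn, rfl⟩ := hy
  exact ⟨m + n, by intro d hd; rcases Multiset.mem_add.1 hd with h | h; exacts [hm d h, hn d h],
    by simp⟩

lemma IsRep.neg {x : F} (hx : IsRep x) : IsRep (-x) := by
  obtain ⟨m, hm, rfl⟩ := hx
  refine ⟨m.map (fun d => -d), ?_, ?_⟩
  · intro d hd
    obtain ⟨e, he, rfl⟩ := Multiset.mem_map.1 hd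
    simpa using hm e he
  · rw [Multiset.map_map, ← Multiset.sum_map_neg']
    rw [Multiset.map_map]
    congr 1
    apply Multiset.map_congr rfl
    intro d hd
    simp only [Function.comp_apply, map_neg, inv_neg]

lemma IsRep.mul {x y : F} (hx : IsRep x) (hy : IsRep y) : IsRep (x * y) := by
  obtain ⟨m, hm, rfl⟩ := hx
  obtain ⟨n, hn, rfl⟩ := hy
  refine ⟨m.bind (fun d => n.map (fun e => d * e)), ?_, ?_⟩
  · intro d hd
    obtain ⟨a, ha, hd'⟩ := Multiset.mem_bind.1 hd
    obtain ⟨b, hb, rfl⟩ := Multiset.mem_map.1 hd'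
    exact mul_ne_zero (hm a ha) (hn b hb)
  · rw [Multiset.map_bind, Multiset.sum_bind, ← Multiset.sum_map_mul_right]
    congr 1
    apply Multiset.map_congr rfl
    intro d hd
    rw [← Multiset.sum_map_mul_left, Multiset.map_map]
    congr 1
    apply Multiset.map_congr rfl
    intro e he
    simp only [Function.comp_apply, map_mul, mul_inv]


lemma flatten {x : F} (hx : x ∈ recip D) : IsRep x := by
  refine Subring.closure_induction ?_ ?_ ?_ ?_ ?_ ?_ hx
  · rintro x ⟨d, hd, rfl⟩
    exact ⟨{d}, by simpa using hd, by simp⟩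
  · exact IsRep.zero
  · exact IsRep.one
  · exact fun x y _ _ hx hy => hx.add hy
  · exact fun x _ hx => hx.neg
  · exact fun x y _ _ hx hy => hx.mul hy

lemma rep_mem {m : Multiset D} (hm : ∀ d ∈ m, d ≠ 0) :
    (m.map (fun d => ((ι) d)⁻¹)).sum ∈ recip D := by
  refine multiset_sum_mem _ ?_
  intro x hx
  obtain ⟨d, hd, rfl⟩ := Multiset.mem_map.1 hx
  exact inv_mem (hm d hd)

section Comb

variable {κ : Type*} [DecidableEq κ] (d : κ → D)

/-- product over S -/
def pP (S : Finset κ) : D := ∏ i ∈ S, d i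

/-- sum of products of complements -/
def sg (S : Finset κ) : D := ∑ i ∈ S, pP d (S.erase i)

/-- the cleared denominator of 1 - Σ 1/d_i -/
def W (S : Finset κ) : D := pP d S - sg d S

lemma pP_empty : pP d (∅ : Finset κ) = 1 := by simp [pP]

lemma sg_empty : sg d (∅ : Finset κ) = 0 := by simp [sg]

lemma W_empty : W d (∅ : Finset κ) = 1 := by simp [W, pP, sg]

lemma pP_erase {S : Finset κ} {i : κ} (hi : i ∈ S) : pP d S = d i * pP d (S.erase i) :=
  (Finset.mul_prod_erase _ _ hi).symm

lemma pP_ne_zero {S : Finset κ} (h0 : ∀ i ∈ S, d i ≠ 0) : pP d S ≠ 0 :=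
  Finset.prod_ne_zero_iff.2 h0

lemma sg_erase {S : Finset κ} {i : κ} (hi : i ∈ S) :
    sg d S = pP d (S.erase i) + d i * sg d (S.erase i) := by
  unfold sg
  rw [← Finset.add_sum_erase _ _ hi, Finset.mul_sum]
  congr 1
  apply Finset.sum_congr rfl
  intro l hl
  have hil : i ∈ S.erase l :=
    Finset.mem_erase.2 ⟨((Finset.mem_erase.1 hl).1).symm, hi⟩
  rw [pP_erase d hil]
  congr 1
  rw [Finset.erase_right_comm]

/-- key identity: (d i - 1) * W (S \ i) = W S + sg (S \ i) -/
lemma key_c {S : Finset κ} {i : κ} (hi : i ∈ S) :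
    (d i - 1) * W d (S.erase i) = W d S + sg d (S.erase i) := by
  unfold W
  rw [pP_erase d hi, sg_erase d hi]
  ring

/-- (Σ_{i∈S} 1/d i) * pP S = sg S in F -/
lemma sum_inv_mul {S : Finset κ} (h0 : ∀ i ∈ S, d i ≠ 0) :
    (∑ i ∈ S, ((ι) (d i))⁻¹) * (ι) (pP d S) = (ι) (sg d S) := by
  rw [Finset.sum_mul]
  unfold sg
  rw [map_sum]
  apply Finset.sum_congr rfl
  intro i hi
  rw [pP_erase d hi, map_mul]
  rw [inv_mul_cancel_left₀ (iota_ne_zero (h0 i hi))]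

omit [IsDomain D] in
lemma helper {Fld : Type*} [Field Fld] {a b c x y : Fld} (hx : x ≠ 0) (hy : y ≠ 0)
    (h : a * y = b * x + c * b + b * y) :
    a * x⁻¹ = b * y⁻¹ + (c * y⁻¹) * (b * x⁻¹) + b * x⁻¹ := by
  calc a * x⁻¹ = (a * y) * y⁻¹ * x⁻¹ := by rw [mul_inv_cancel_right₀ hy]
    _ = (b * x + c * b + b * y) * y⁻¹ * x⁻¹ := by rw [h]
    _ = b * (x * x⁻¹) * y⁻¹ + (c * y⁻¹) * (b * x⁻¹) + b * (y * y⁻¹) * x⁻¹ := by ring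
    _ = b * y⁻¹ + (c * y⁻¹) * (b * x⁻¹) + b * x⁻¹ := by
        rw [mul_inv_cancel₀ hx, mul_inv_cancel₀ hy]; ring

/-- **Main lemma.** If all sub-denominators W are nonzero, then pP S' / W S ∈ R(D). -/
lemma L1 : ∀ (μ : ℕ) (S S' : Finset κ), S.card^2 + S'.card ≤ μ →
    (∀ i ∈ S, d i ≠ 0) → (∀ S'' ⊆ S, S''.Nonempty → W d S'' ≠ 0) → S' ⊆ S →
    (ι) (pP d S') * ((ι) (W d S))⁻¹ ∈ recip D := by
  intro μ
  induction μ with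
  | zero =>
    intro S S' hμ h0 hW hS'
    have hsq : S.card ^ 2 = 0 := by omega
    have hS : S = ∅ := Finset.card_eq_zero.1 (pow_eq_zero_iff (two_ne_zero)|>.1 hsq)
    have hS'e : S' = ∅ := Finset.card_eq_zero.1 (by omega)
    subst hS; subst hS'e
    rw [pP_empty, W_empty]
    simp only [map_one, inv_one, one_mul]
    exact one_mem _
  | succ μ ih =>
    intro S S' hμ h0 hW hS'
    by_cases hS'e : S' = ∅
    · subst hS'e
      rw [pP_empty, map_one, one_mul]
      rcases Finset.eq_empty_or_nonempty S with hS | hS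
      · subst hS; rw [W_empty]; simp only [map_one, inv_one]; exact one_mem _
      · exact inv_mem (hW S le_rfl hS)
    · obtain ⟨i, hi⟩ := Finset.nonempty_iff_ne_empty.2 hS'e
      have hiS : i ∈ S := hS' hi
      set S₁ := S.erase i with hS₁
      set S₁' := S'.erase i with hS₁'
      have hScard : 1 ≤ S.card := Finset.card_pos.2 ⟨i, hiS⟩
      have hS'card : 1 ≤ S'.card := Finset.card_pos.2 ⟨i, hi⟩
      have hS₁card : S₁.card = S.card - 1 := Finset.card_erase_of_mem hiS
      have hS₁'sub : S₁' ⊆ S₁ := Finset.erase_subset_erase _ hS'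
      have hS₁sub : S₁ ⊆ S := Finset.erase_subset _ _
      have hWX : W d S ≠ 0 := hW S le_rfl ⟨i, hiS⟩
      have hWY : W d S₁ ≠ 0 := by
        rcases Finset.eq_empty_or_nonempty S₁ with h | h
        · rw [h, W_empty]; exact one_ne_zero
        · exact hW S₁ hS₁sub h
      have hX : ((ι) (W d S)) ≠ 0 := iota_ne_zero hWX
      have hY : ((ι) (W d S₁)) ≠ 0 := iota_ne_zero hWY
      -- the identity in D
      have hDid : pP d S' * W d S₁ =
          pP d S₁' * W d S + sg d S₁ * pP d S₁' + pP d S₁' * W d S₁ := by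
        have h := key_c d hiS
        rw [← hS₁] at h
        rw [pP_erase d hi, ← hS₁']
        linear_combination pP d S₁' * h
      -- the division identity in F
      have heq : (ι) (pP d S') * ((ι) (W d S))⁻¹ =
          ((ι) (pP d S₁') * ((ι) (W d S₁))⁻¹) +
          (((ι) (sg d S₁) * ((ι) (W d S₁))⁻¹) * ((ι) (pP d S₁') * ((ι) (W d S))⁻¹)) +
          ((ι) (pP d S₁') * ((ι) (W d S))⁻¹) := by
        refine helper hX hY ?_
        rw [← map_mul, ← map_mul, ← map_mul, ← map_mul, ← map_add, ← map_add]
        exact congrArg _ hDid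
      rw [heq]
      have haμ : S.card ^ 2 ≤ μ := by omega
      have hplus : S₁.card + 1 = S.card := by omega
      have harith : S₁.card ^ 2 + S₁.card < S.card ^ 2 := by nlinarith [hplus]
      have hmeas1 : S₁.card ^ 2 + S₁'.card ≤ μ := by
        have h1 : S₁'.card ≤ S₁.card := Finset.card_le_card hS₁'sub
        omega
      have hmeas3 : S.card ^ 2 + S₁'.card ≤ μ := by
        have : S₁'.card = S'.card - 1 := Finset.card_erase_of_mem hi
        omega
      have h0₁ : ∀ j ∈ S₁, d j ≠ 0 := fun j hj => h0 j (hS₁sub hj)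
      have hW₁ : ∀ S'' ⊆ S₁, S''.Nonempty → W d S'' ≠ 0 :=
        fun S'' h h' => hW S'' (h.trans hS₁sub) h'
      have T1 : (ι) (pP d S₁') * ((ι) (W d S₁))⁻¹ ∈ recip D :=
        ih S₁ S₁' hmeas1 h0₁ hW₁ hS₁'sub
      have T3 : (ι) (pP d S₁') * ((ι) (W d S))⁻¹ ∈ recip D :=
        ih S S₁' hmeas3 h0 hW (hS₁'sub.trans hS₁sub)
      have T2a : (ι) (sg d S₁) * ((ι) (W d S₁))⁻¹ ∈ recip D := by
        unfold sg
        rw [map_sum, Finset.sum_mul]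
        refine sum_mem ?_
        intro l hl
        have hmeas2 : S₁.card ^ 2 + (S₁.erase l).card ≤ μ := by
          have h2 : (S₁.erase l).card ≤ S₁.card := Finset.card_le_card (Finset.erase_subset _ _)
          omega
        exact ih S₁ (S₁.erase l) hmeas2 h0₁ hW₁ (Finset.erase_subset _ _)
      exact add_mem (add_mem T1 (mul_mem T2a T3)) T3

/-- **Key unit lemma**: if every d i (i ∈ S) is a nonzero non-Egyptian element,
then 1 - Σ_{i∈S} 1/(d i) has an inverse in recip D. -/
lemma unit_one_sub : ∀ (μ : ℕ) (S : Finset κ), S.card ≤ μ →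
    (∀ i ∈ S, d i ≠ 0) → (∀ i ∈ S, (ι) (d i) ∉ recip D) →
    ∃ y ∈ recip D, (1 - ∑ i ∈ S, ((ι) (d i))⁻¹) * y = 1 := by
  intro μ
  induction μ with
  | zero =>
    intro S hμ _ _
    have hS : S = ∅ := Finset.card_eq_zero.1 (by omega)
    subst hS
    exact ⟨1, one_mem _, by simp⟩
  | succ μ ih =>
    intro S hμ h0 hnE
    -- nondegeneracy
    have hW : ∀ S'' ⊆ S, S''.Nonempty → W d S'' ≠ 0 := by
      intro S'' hsub hne
      by_contra hc
      have hp : (ι) (pP d S'') ≠ 0 :=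
        iota_ne_zero (pP_ne_zero d (fun i hi => h0 i (hsub hi)))
      have hps : pP d S'' = sg d S'' := by
        have h2 : pP d S'' - sg d S'' = 0 := hc
        linear_combination h2
      have hsum : (∑ i ∈ S'', ((ι) (d i))⁻¹) = 1 := by
        have h1 := sum_inv_mul d (fun i hi => h0 i (hsub hi)) (S := S'')
        rw [hps] at h1 hp
        exact mul_right_cancel₀ hp (h1.trans (one_mul _).symm)
      obtain ⟨j, hj⟩ := hne
      have hjS : j ∈ S := hsub hj
      have hrest : (1 : F) - ∑ i ∈ S''.erase j, ((ι) (d i))⁻¹ = ((ι) (d j))⁻¹ := by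
        rw [← Finset.add_sum_erase _ _ hj] at hsum
        linear_combination -hsum
      have hcard : (S''.erase j).card ≤ μ := by
        have h2 : (S''.erase j).card < S''.card := Finset.card_erase_lt_of_mem hj
        have h3 : S''.card ≤ S.card := Finset.card_le_card hsub
        omega
      obtain ⟨y, hy, hy1⟩ := ih (S''.erase j) hcard
        (fun i hi => h0 i (hsub (Finset.mem_of_mem_erase hi)))
        (fun i hi => hnE i (hsub (Finset.mem_of_mem_erase hi)))
      rw [hrest] at hy1
      have hyd : y = (ι) (d j) := by
        have hdj : ((ι) (d j)) ≠ 0 := iota_ne_zero (h0 j hjS)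
        field_simp at hy1
        exact hy1
      exact hnE j hjS (hyd ▸ hy)
    rcases Finset.eq_empty_or_nonempty S with hS | hS
    · subst hS; exact ⟨1, one_mem _, by simp⟩
    · have hp : (ι) (pP d S) ≠ 0 := iota_ne_zero (pP_ne_zero d h0)
      have hWS : (ι) (W d S) ≠ 0 := iota_ne_zero (hW S le_rfl hS)
      have hAp : (1 - ∑ i ∈ S, ((ι) (d i))⁻¹) * (ι) (pP d S) = (ι) (W d S) := by
        rw [sub_mul, one_mul, sum_inv_mul d h0, ← map_sub]
        rfl
      refine ⟨(ι) (pP d S) * ((ι) (W d S))⁻¹,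
        L1 d (S.card ^ 2 + S.card) S S le_rfl h0 hW le_rfl, ?_⟩
      rw [← mul_assoc, hAp, mul_inv_cancel₀ hWS]

end Comb

omit [IsDomain D] in
lemma list_sum_fin (l : List D) (f : D → F) :
    (l.map f).sum = ∑ i : Fin l.length, f l[i] := by
  induction l with
  | nil => simp
  | cons a t ih =>
    rw [List.map_cons, List.sum_cons, ih]
    have h2 : ∑ i : Fin (a :: t).length, f (a :: t)[i]
        = f ((a :: t)[(0 : Fin (t.length + 1))]) +
          ∑ i : Fin t.length, f ((a :: t)[((i.succ : Fin (t.length + 1)))]) :=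
      Fin.sum_univ_succ _
    rw [h2]
    simp

/-- unit lemma, list form, for `1 + Σ 1/g` -/
lemma unit_one_add_list (l : List D) (h : ∀ g ∈ l, g ≠ 0 ∧ (ι) g ∉ recip D) :
    ∃ y ∈ recip D, (1 + (l.map fun g => ((ι) g)⁻¹).sum) * y = 1 := by
  classical
  set d : Fin l.length → D := fun i => -l[i] with hd
  have h0 : ∀ i ∈ (Finset.univ : Finset (Fin l.length)), d i ≠ 0 := by
    intro i _
    simpa [hd] using (h l[i] (List.getElem_mem _)).1
  have hnE : ∀ i ∈ (Finset.univ : Finset (Fin l.length)), (ι) (d i) ∉ recip D := by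
    intro i _ hmem
    refine (h l[i] (List.getElem_mem _)).2 ?_
    have : -((ι) (d i)) ∈ recip D := neg_mem hmem
    simpa [hd] using this
  obtain ⟨y, hy, hy1⟩ := unit_one_sub d (Finset.univ.card) Finset.univ le_rfl h0 hnE
  refine ⟨y, hy, ?_⟩
  have hsum : (1 : F) - ∑ i ∈ Finset.univ, ((ι) (d i))⁻¹
      = 1 + (l.map fun g => ((ι) g)⁻¹).sum := by
    rw [list_sum_fin l (fun g => ((ι) g)⁻¹)]
    rw [sub_eq_add_neg, ← Finset.sum_neg_distrib]
    congr 1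
    apply Finset.sum_congr rfl
    intro i _
    simp only [hd, map_neg, inv_neg, neg_neg]
  rw [← hsum]
  exact hy1

/-- representation with nonzero non-Egyptian denominators -/
def IsRepN (x : F) : Prop :=
  ∃ m : Multiset D, (∀ g ∈ m, g ≠ 0 ∧ (ι) g ∉ recip D) ∧
    x = (m.map (fun g => ((ι) g)⁻¹)).sum

lemma IsRepN.zero : IsRepN (0 : F) := ⟨0, by simp, by simp⟩

lemma IsRepN.add {x y : F} (hx : IsRepN x) (hy : IsRepN y) : IsRepN (x + y) := by
  obtain ⟨m, hm, rfl⟩ := hx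
  obtain ⟨n, hn, rfl⟩ := hy
  exact ⟨m + n, by
    intro g hg; rcases Multiset.mem_add.1 hg with h | h; exacts [hm g h, hn g h],
    by simp⟩

lemma IsRepN.smul {r x : F} (hr : r ∈ recip D) (hx : IsRepN x) : IsRepN (r * x) := by
  obtain ⟨m, hm, rfl⟩ := flatten hr
  obtain ⟨n, hn, rfl⟩ := hx
  refine ⟨m.bind (fun e => n.map (fun g => e * g)), ?_, ?_⟩
  · intro g hg
    obtain ⟨a, ha, hg'⟩ := Multiset.mem_bind.1 hg
    obtain ⟨b, hb, rfl⟩ := Multiset.mem_map.1 hg'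
    refine ⟨mul_ne_zero (hm a ha) (hn b hb).1, ?_⟩
    intro hab
    refine (hn b hb).2 ?_
    have h1 : ((ι) (a * b)) * ((ι) a)⁻¹ ∈ recip D := mul_mem hab (inv_mem (hm a ha))
    have h2 : ((ι) (a * b)) * ((ι) a)⁻¹ = (ι) b := by
      rw [map_mul]
      rw [mul_comm ((ι) a) ((ι) b), mul_inv_cancel_right₀ (iota_ne_zero (hm a ha))]
    rwa [h2] at h1
  · rw [Multiset.map_bind, Multiset.sum_bind, ← Multiset.sum_map_mul_right]
    congr 1
    apply Multiset.map_congr rfl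
    intro e he
    rw [← Multiset.sum_map_mul_left, Multiset.map_map]
    congr 1
    apply Multiset.map_congr rfl
    intro g hg
    simp only [Function.comp_apply, map_mul, mul_inv]

variable (D)

/-- the generating set of the maximal ideal -/
def egySet : Set (recip D) := {α : recip D | ∃ f : D, f ≠ 0 ∧
    algebraMap D (FractionRing D) f ∉ recip D ∧
    (α : FractionRing D) = (algebraMap D (FractionRing D) f)⁻¹}

/-- the candidate maximal ideal -/
noncomputable def MId : Ideal (recip D) := Ideal.span (egySet D)

variable {D}

lemma mem_MId_rep {x : recip D} (hx : x ∈ MId D) : IsRepN ((x : F)) := by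
  refine Submodule.span_induction ?_ ?_ ?_ ?_ hx
  · rintro α ⟨f, hf, hfE, hα⟩
    exact ⟨{f}, by simpa using ⟨hf, hfE⟩, by simpa using hα⟩
  · exact IsRepN.zero
  · intro a b _ _ ha hb
    have : ((a + b : recip D) : F) = (a : F) + (b : F) := rfl
    rw [this]
    exact ha.add hb
  · intro r a _ ha
    have h2 : ((r • a : recip D) : F) = (r : F) * (a : F) := rfl
    rw [h2]
    exact IsRepN.smul r.2 ha

/-- helper to build units of the subring -/
lemma isUnit_of_inv (x : recip D) {y : F} (hy : y ∈ recip D) (h : (x : F) * y = 1) :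
    IsUnit x := by
  refine isUnit_iff_exists_inv.2 ⟨⟨y, hy⟩, ?_⟩
  exact Subtype.ext h

lemma unit_one_add_M {x : recip D} (hx : x ∈ MId D) : IsUnit (1 + x) := by
  obtain ⟨m, hm, hrep⟩ := mem_MId_rep hx
  have hl : ∀ g ∈ m.toList, g ≠ 0 ∧ (ι) g ∉ recip D := by
    intro g hg
    exact hm g (by rwa [← Multiset.mem_toList])
  obtain ⟨y, hy, hy1⟩ := unit_one_add_list m.toList hl
  refine isUnit_of_inv _ hy ?_
  have hco : ((1 + x : recip D) : F) = 1 + (x : F) := rfl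
  rw [hco, hrep]
  have hms : (Multiset.map (fun g => ((ι) g)⁻¹) m).sum
      = ((m.toList).map (fun g => ((ι) g)⁻¹)).sum := by
    conv_lhs => rw [← Multiset.coe_toList m]
    rw [Multiset.map_coe, Multiset.sum_coe]
  rw [hms]
  exact hy1

instance : Nontrivial (recip D) :=
  ⟨0, 1, fun h => one_ne_zero (α := F) (congrArg Subtype.val h).symm⟩

lemma MId_ne_top : MId D ≠ ⊤ := by
  intro h
  have h1 : (1 : recip D) ∈ MId D := h ▸ Submodule.mem_top
  have hneg : (-1 : recip D) ∈ MId D := neg_mem h1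
  have := unit_one_add_M hneg
  rw [add_neg_cancel] at this
  exact not_isUnit_zero this

/-- a nonzero sum of reciprocals of Egyptian elements is a unit -/
lemma egy_sum_unit (l : List D) (h0 : ∀ e ∈ l, e ≠ 0) (hE : ∀ e ∈ l, (ι) e ∈ recip D)
    (hne : ((l.map fun e => ((ι) e)⁻¹).sum : F) ≠ 0) :
    ∃ y ∈ recip D, ((l.map fun e => ((ι) e)⁻¹).sum : F) * y = 1 := by
  classical
  set d : Fin l.length → D := fun i => l[i] with hd
  have h0' : ∀ i ∈ (Finset.univ : Finset (Fin l.length)), d i ≠ 0 :=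
    fun i _ => h0 l[i] (List.getElem_mem _)
  have hsum : ((l.map fun e => ((ι) e)⁻¹).sum : F) = ∑ i ∈ Finset.univ, ((ι) (d i))⁻¹ :=
    list_sum_fin l _
  have hp : (ι) (pP d Finset.univ) ≠ 0 := iota_ne_zero (pP_ne_zero d h0')
  have hkey := sum_inv_mul d h0' (S := (Finset.univ : Finset (Fin l.length)))
  have hσ : (ι) (sg d Finset.univ) ≠ 0 := by
    rw [← hkey]
    exact mul_ne_zero (by rwa [← hsum]) hp
  have hσD : sg d Finset.univ ≠ 0 := fun h => hσ (by rw [h, map_zero])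
  refine ⟨(ι) (pP d Finset.univ) * ((ι) (sg d Finset.univ))⁻¹, ?_, ?_⟩
  · refine mul_mem ?_ (inv_mem hσD)
    unfold pP
    rw [map_prod]
    refine prod_mem ?_
    intro i _
    exact hE l[i] (List.getElem_mem _)
  · rw [hsum, ← mul_assoc, hkey, mul_inv_cancel₀ hσ]

/-- main dichotomy: an element outside MId is a unit -/
lemma unit_of_not_mem_MId (x : recip D) (hx : x ∉ MId D) : IsUnit x := by
  classical
  obtain ⟨m, hm, hrep⟩ := flatten x.2
  set p : D → Prop := fun g => (ι) g ∈ recip D with hp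
  set mE := m.filter p with hmE
  set mN := m.filter (fun g => ¬ p g) with hmN
  have hsplit : mE + mN = m := Multiset.filter_add_not _ _
  set y : F := (mE.map (fun g => ((ι) g)⁻¹)).sum with hy
  set z : F := (mN.map (fun g => ((ι) g)⁻¹)).sum with hz
  have hxyz : (x : F) = y + z := by
    rw [hrep, ← hsplit]
    simp [hy, hz]
  have hzR : z ∈ recip D := rep_mem (fun g hg => hm g (Multiset.mem_of_mem_filter hg))
  have hyR : y ∈ recip D := rep_mem (fun g hg => hm g (Multiset.mem_of_mem_filter hg))
  have hzM : ∀ (mm : Multiset D), (∀ g ∈ mm, g ≠ 0 ∧ (ι) g ∉ recip D) →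
      ∀ (hmem : (mm.map (fun g => ((ι) g)⁻¹)).sum ∈ recip D),
      (⟨(mm.map (fun g => ((ι) g)⁻¹)).sum, hmem⟩ : recip D) ∈ MId D := by
    intro mm
    induction mm using Multiset.induction with
    | empty =>
      intro _ hmem
      have : (⟨(Multiset.map (fun g => ((ι) g)⁻¹) 0).sum, hmem⟩ : recip D) = 0 :=
        Subtype.ext (by simp)
      rw [this]
      exact zero_mem _
    | cons a t ih =>
      intro hcond hmem
      have ha0 : a ≠ 0 := (hcond a (Multiset.mem_cons_self a t)).1
      have haE : (ι) a ∉ recip D := (hcond a (Multiset.mem_cons_self a t)).2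
      have haR : ((ι) a)⁻¹ ∈ recip D := inv_mem ha0
      have htR : (t.map (fun g => ((ι) g)⁻¹)).sum ∈ recip D :=
        rep_mem (fun g hg => (hcond g (Multiset.mem_cons_of_mem hg)).1)
      have hsum2 : (⟨((a ::ₘ t).map (fun g => ((ι) g)⁻¹)).sum, hmem⟩ : recip D)
          = ⟨((ι) a)⁻¹, haR⟩ + ⟨(t.map (fun g => ((ι) g)⁻¹)).sum, htR⟩ :=
        Subtype.ext (by push_cast; simp)
      rw [hsum2]
      refine add_mem (Ideal.subset_span ⟨a, ha0, haE, rfl⟩) ?_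
      exact ih (fun g hg => hcond g (Multiset.mem_cons_of_mem hg)) htR
  have hzM' : (⟨z, hzR⟩ : recip D) ∈ MId D := by
    have hcond : ∀ g ∈ mN, g ≠ 0 ∧ (ι) g ∉ recip D := by
      intro g hg
      exact ⟨hm g (Multiset.mem_of_mem_filter hg), (Multiset.mem_filter.1 hg).2⟩
    exact hzM mN hcond hzR
  by_cases hy0 : y = 0
  · exfalso
    apply hx
    have : x = ⟨z, hzR⟩ := Subtype.ext (by rw [hxyz, hy0, zero_add])
    rwa [this]
  · -- y is a unit
    have hlE0 : ∀ e ∈ mE.toList, e ≠ 0 := by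
      intro e he
      exact hm e (Multiset.mem_of_mem_filter (by rwa [← Multiset.mem_toList]))
    have hlEE : ∀ e ∈ mE.toList, (ι) e ∈ recip D := by
      intro e he
      exact (Multiset.mem_filter.1 (by rwa [← Multiset.mem_toList] : e ∈ mE)).2
    have hysum : y = ((mE.toList).map (fun g => ((ι) g)⁻¹)).sum := by
      rw [hy]
      conv_lhs => rw [← Multiset.coe_toList mE]
      rw [Multiset.map_coe, Multiset.sum_coe]
    obtain ⟨w, hwR, hw1⟩ := egy_sum_unit mE.toList hlE0 hlEE (by rwa [← hysum])
    -- x = Y * (1 + W * Z)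
    set Y : recip D := ⟨y, hyR⟩ with hY
    set Wu : recip D := ⟨w, hwR⟩ with hW
    have hYW : Y * Wu = 1 := Subtype.ext (by rw [← hysum] at hw1; exact hw1)
    have hfac : x = Y * (1 + Wu * ⟨z, hzR⟩) := by
      apply Subtype.ext
      have : ((Y * (1 + Wu * ⟨z, hzR⟩) : recip D) : F) = y * (1 + w * z) := rfl
      rw [this, hxyz]
      have hyw : y * w = 1 := by rw [← hysum] at hw1; exact hw1
      linear_combination -z * hyw
    rw [hfac]
    refine IsUnit.mul (IsUnit.of_mul_eq_one _ hYW) (unit_one_add_M ?_)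
    exact Ideal.mul_mem_left _ _ hzM'

end RecipAux

/-- For any domain `D`, the ring `R(D)` is local, and its (unique)
maximal ideal is generated by the elements `1/f`, `f` ranging over the nonzero
non-Egyptian elements of `D`. -/
theorem stmt_9 (D : Type*) [CommRing D] [IsDomain D] :
    IsLocalRing (recip D) ∧
    ∀ m : Ideal (recip D), m.IsMaximal →
      m = Ideal.span {α : recip D | ∃ f : D, f ≠ 0 ∧
        algebraMap D (FractionRing D) f ∉ recip D ∧
        (α : FractionRing D) = (algebraMap D (FractionRing D) f)⁻¹} := by
  constructor
  · refine IsLocalRing.of_isUnit_or_isUnit_one_sub_self ?_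
    intro a
    by_cases ha : a ∈ RecipAux.MId D
    · right
      have : (1 : ↥(recip D)) - a = 1 + (-a) := by ring
      rw [this]
      exact RecipAux.unit_one_add_M (neg_mem ha)
    · exact Or.inl (RecipAux.unit_of_not_mem_MId a ha)
  · intro m hm
    have hle : m ≤ RecipAux.MId D := by
      intro x hx
      by_contra hxM
      exact hm.ne_top (Ideal.eq_top_of_isUnit_mem m hx (RecipAux.unit_of_not_mem_MId x hxM))
    exact (hm.eq_of_le RecipAux.MId_ne_top hle).symm ▸ rfl
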